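/- The variance of the number of inversions of a uniformly random permutation of {1,...,n} equals n(n-1)(2n+5)/72. -/
import Mathlib

def invCount {n : ℕ} (σ : Equiv.Perm (Fin n)) : ℕ :=
  (Finset.univ.filter fun p : Fin n × Fin n => p.1 < p.2 ∧ σ p.2 < σ p.1).card

open Finset Equiv

/-- The insertion map: `Phi k e` sends `last` to `k` and `castSucc i` to `k.succAbove (e i)`. -/
def Phi {n : ℕ} (k : Fin (n+1)) (e : Equiv.Perm (Fin n)) : Equiv.Perm (Fin (n+1)) :=
  (finSuccEquivLast.trans (Equiv.optionCongr e)).trans (finSuccEquiv' k).symm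

@[simp] lemma Phi_castSucc {n : ℕ} (k : Fin (n+1)) (e : Equiv.Perm (Fin n)) (i : Fin n) :
    Phi k e (Fin.castSucc i) = k.succAbove (e i) := by
  simp [Phi]

@[simp] lemma Phi_last {n : ℕ} (k : Fin (n+1)) (e : Equiv.Perm (Fin n)) :
    Phi k e (Fin.last n) = k := by
  simp [Phi]

lemma Phi_bijective {n : ℕ} :
    Function.Bijective (fun p : Fin (n+1) × Equiv.Perm (Fin n) => Phi p.1 p.2) := by
  rw [Fintype.bijective_iff_injective_and_card]
  constructor
  · rintro ⟨k, e⟩ ⟨k', e'⟩ h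
    simp only at h
    have hk : k = k' := by
      have := congrArg (fun σ : Equiv.Perm (Fin (n+1)) => σ (Fin.last n)) h
      simpa using this
    subst hk
    have he : e = e' := by
      apply Equiv.ext
      intro i
      have := congrArg (fun σ : Equiv.Perm (Fin (n+1)) => σ (Fin.castSucc i)) h
      simp only [Phi_castSucc] at this
      exact Fin.succAbove_right_injective this
    simp [he]
  · simp [Fintype.card_perm, Nat.factorial_succ]

lemma invCount_eq_sum {n : ℕ} (σ : Equiv.Perm (Fin n)) :
    invCount σ = ∑ j : Fin n, (Finset.univ.filter fun i => i < j ∧ σ j < σ i).card := by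
  classical
  simp only [invCount, Finset.card_filter, Fintype.sum_prod_type]
  exact Finset.sum_comm

lemma myCardFilterLe {n : ℕ} (k : Fin (n+1)) :
    (Finset.univ.filter fun m : Fin n => (k : ℕ) ≤ (m : ℕ)).card = n - k := by
  classical
  rw [Finset.card_filter, Fin.sum_univ_eq_sum_range (fun m => if (k:ℕ) ≤ m then 1 else 0)]
  rw [← Finset.card_filter]
  have : Finset.filter (fun m => (k:ℕ) ≤ m) (Finset.range n) = Finset.Ico (k:ℕ) n := by
    ext m
    simp [Finset.mem_filter, Finset.mem_Ico, and_comm]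
  rw [this, Nat.card_Ico]

lemma invCount_Phi {n : ℕ} (k : Fin (n+1)) (e : Equiv.Perm (Fin n)) :
    invCount (Phi k e) = invCount e + (n - k) := by
  classical
  rw [invCount_eq_sum, Fin.sum_univ_castSucc]
  have hlast : (Finset.univ.filter fun i : Fin (n+1) =>
      i < Fin.last n ∧ (Phi k e) (Fin.last n) < (Phi k e) i).card = n - k := by
    rw [Finset.card_filter, Fin.sum_univ_castSucc]
    simp only [Phi_last, Phi_castSucc, Fin.castSucc_lt_last, true_and, lt_self_iff_false,
      false_and, if_false, add_zero]
    have h1 : ∀ i : Fin n, (if k < k.succAbove (e i) then (1:ℕ) else 0)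
        = (if (k:ℕ) ≤ ((e i) : ℕ) then 1 else 0) := by
      intro i
      by_cases h : (k:ℕ) ≤ ((e i):ℕ)
      · simp [h, Fin.lt_succAbove_iff_le_castSucc, Fin.le_def]
      · simp [h, Fin.lt_succAbove_iff_le_castSucc, Fin.le_def]
    rw [Finset.sum_congr rfl fun i _ => h1 i,
      Equiv.sum_comp e (fun m : Fin n => if (k:ℕ) ≤ (m:ℕ) then (1:ℕ) else 0),
      ← Finset.card_filter, myCardFilterLe]
  rw [hlast]
  congr 1
  rw [invCount_eq_sum]
  apply Finset.sum_congr rfl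
  intro j _
  rw [Finset.card_filter, Finset.card_filter, Fin.sum_univ_castSucc]
  have hl : ¬ (Fin.last n < Fin.castSucc j) := not_lt.mpr (Fin.castSucc_lt_last j).le
  simp only [hl, false_and, if_false, add_zero, Phi_castSucc,
    Fin.castSucc_lt_castSucc_iff, Fin.succAbove_lt_succAbove_iff]

lemma sum_range_cast (m : ℕ) : ∑ k ∈ Finset.range m, (k:ℝ) = m * (m-1) / 2 := by
  induction m with
  | zero => simp
  | succ p ih => rw [Finset.sum_range_succ, ih]; push_cast; ring

lemma sum_range_sq_cast (m : ℕ) : ∑ k ∈ Finset.range m, (k:ℝ)^2 = m * (m-1) * (2*m-1) / 6 := by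
  induction m with
  | zero => simp
  | succ p ih => rw [Finset.sum_range_succ, ih]; push_cast; ring

lemma cast_sub_fin {n : ℕ} (k : Fin (n+1)) : ((n - (k:ℕ) : ℕ) : ℝ) = (n : ℝ) - (k : ℕ) :=
  Nat.cast_sub (Nat.lt_succ_iff.mp k.isLt)

lemma sum_fin_cast (n : ℕ) : ∑ k : Fin (n+1), ((k:ℕ) : ℝ) = (n+1) * n / 2 := by
  rw [Fin.sum_univ_eq_sum_range (fun k => (k:ℝ)), sum_range_cast]
  push_cast; ring

lemma sum_fin_sq_cast (n : ℕ) : ∑ k : Fin (n+1), ((k:ℕ) : ℝ)^2 = (n+1) * n * (2*n+1) / 6 := by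
  rw [Fin.sum_univ_eq_sum_range (fun k => (k:ℝ)^2), sum_range_sq_cast]
  push_cast; ring

lemma sum_B (n : ℕ) : ∑ k : Fin (n+1), (((n:ℝ) - (k:ℕ)) - n/2) = 0 := by
  have h : ∀ k : Fin (n+1), (((n:ℝ) - (k:ℕ)) - n/2) = n/2 - ((k:ℕ):ℝ) := by
    intro k; ring
  rw [Finset.sum_congr rfl fun k _ => h k, Finset.sum_sub_distrib, Finset.sum_const,
    sum_fin_cast, Finset.card_univ, Fintype.card_fin, nsmul_eq_mul]
  push_cast; ring

lemma sum_B_sq (n : ℕ) :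
    ∑ k : Fin (n+1), (((n:ℝ) - (k:ℕ)) - (n:ℝ)/2)^2 = ((n:ℝ)+1) * (n:ℝ) * ((n:ℝ)+2) / 12 := by
  have h : ∀ k : Fin (n+1), (((n:ℝ) - (k:ℕ)) - n/2)^2
      = ((k:ℕ):ℝ)^2 - n * ((k:ℕ):ℝ) + (n:ℝ)^2/4 := by
    intro k; ring
  rw [Finset.sum_congr rfl fun k _ => h k, Finset.sum_add_distrib, Finset.sum_sub_distrib,
    ← Finset.mul_sum, sum_fin_cast, sum_fin_sq_cast, Finset.sum_const, Finset.card_univ,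
    Fintype.card_fin, nsmul_eq_mul]
  push_cast; ring

lemma sum_invCount (n : ℕ) :
    ∑ σ : Equiv.Perm (Fin n), (invCount σ : ℝ)
      = (n.factorial : ℝ) * ((n:ℝ) * ((n:ℝ) - 1) / 4) := by
  induction n with
  | zero => simp [invCount]
  | succ n ih =>
    rw [← Fintype.sum_bijective _ Phi_bijective _ (fun σ => (invCount σ : ℝ)) (fun p => rfl)]
    simp only [Fintype.sum_prod_type, invCount_Phi]
    push_cast [cast_sub_fin]
    simp only [Finset.sum_add_distrib, ih, Finset.sum_const, Finset.card_univ,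
      Fintype.card_perm, Fintype.card_fin, nsmul_eq_mul]
    have hs : ∑ k : Fin (n+1), ((n:ℝ) - (k:ℕ)) = (n+1) * n / 2 := by
      rw [Finset.sum_sub_distrib, Finset.sum_const, sum_fin_cast, Finset.card_univ,
        Fintype.card_fin, nsmul_eq_mul]
      push_cast; ring
    rw [← Finset.mul_sum, hs, Nat.factorial_succ]
    push_cast
    ring

lemma sum_sq_invCount (n : ℕ) :
    ∑ σ : Equiv.Perm (Fin n), ((invCount σ : ℝ) - (n:ℝ) * ((n:ℝ) - 1) / 4) ^ 2
      = (n.factorial : ℝ) * ((n:ℝ) * ((n:ℝ) - 1) * (2*(n:ℝ) + 5) / 72) := by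
  induction n with
  | zero => norm_num [invCount]
  | succ n ih =>
    rw [← Fintype.sum_bijective _ Phi_bijective _
      (fun σ : Equiv.Perm (Fin (n+1)) =>
        ((invCount σ : ℝ) - ((n+1:ℕ):ℝ) * (((n+1:ℕ):ℝ) - 1) / 4) ^ 2) (fun p => rfl)]
    simp only [Fintype.sum_prod_type, invCount_Phi]
    have expand : ∀ (k : Fin (n+1)) (e : Equiv.Perm (Fin n)),
        (((invCount e + (n - (k:ℕ)) : ℕ) : ℝ) - ((n+1:ℕ):ℝ) * (((n+1:ℕ):ℝ) - 1) / 4) ^ 2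
        = ((invCount e : ℝ) - (n:ℝ) * ((n:ℝ) - 1) / 4) ^ 2
          + (2 * (((n:ℝ) - (k:ℕ)) - (n:ℝ)/2)) * ((invCount e : ℝ) - (n:ℝ) * ((n:ℝ) - 1) / 4)
          + (((n:ℝ) - (k:ℕ)) - (n:ℝ)/2) ^ 2 := by
      intro k e
      rw [Nat.cast_add, cast_sub_fin]
      push_cast
      ring
    have TA : ∑ e : Equiv.Perm (Fin n), ((invCount e : ℝ) - (n:ℝ) * ((n:ℝ) - 1) / 4) = 0 := by
      rw [Finset.sum_sub_distrib, sum_invCount, Finset.sum_const, Finset.card_univ,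
        Fintype.card_perm, Fintype.card_fin, nsmul_eq_mul]
      ring
    have inner : ∀ k : Fin (n+1),
        ∑ e : Equiv.Perm (Fin n),
          (((invCount e : ℝ) - (n:ℝ) * ((n:ℝ) - 1) / 4) ^ 2
            + (2 * (((n:ℝ) - (k:ℕ)) - (n:ℝ)/2)) * ((invCount e : ℝ) - (n:ℝ) * ((n:ℝ) - 1) / 4)
            + (((n:ℝ) - (k:ℕ)) - (n:ℝ)/2) ^ 2)
        = (n.factorial : ℝ) * ((n:ℝ) * ((n:ℝ) - 1) * (2*(n:ℝ) + 5) / 72)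
          + (n.factorial : ℝ) * (((n:ℝ) - (k:ℕ)) - (n:ℝ)/2) ^ 2 := by
      intro k
      rw [Finset.sum_add_distrib, Finset.sum_add_distrib, ih, ← Finset.mul_sum, TA, mul_zero,
        add_zero, Finset.sum_const, Finset.card_univ, Fintype.card_perm, Fintype.card_fin,
        nsmul_eq_mul]
    calc ∑ k : Fin (n+1), ∑ e : Equiv.Perm (Fin n),
          (((invCount e + (n - (k:ℕ)) : ℕ) : ℝ) - ((n+1:ℕ):ℝ) * (((n+1:ℕ):ℝ) - 1) / 4) ^ 2
        = ∑ k : Fin (n+1),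
            ((n.factorial : ℝ) * ((n:ℝ) * ((n:ℝ) - 1) * (2*(n:ℝ) + 5) / 72)
              + (n.factorial : ℝ) * (((n:ℝ) - (k:ℕ)) - (n:ℝ)/2) ^ 2) := by
          refine Finset.sum_congr rfl fun k _ => ?_
          rw [Finset.sum_congr rfl fun e _ => expand k e]
          exact inner k
      _ = ((n:ℝ)+1) * ((n.factorial : ℝ) * ((n:ℝ) * ((n:ℝ) - 1) * (2*(n:ℝ) + 5) / 72))
            + (n.factorial : ℝ) * ∑ k : Fin (n+1), (((n:ℝ) - (k:ℕ)) - (n:ℝ)/2) ^ 2 := by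
          rw [Finset.sum_add_distrib, Finset.sum_const, Finset.card_univ, Fintype.card_fin,
            nsmul_eq_mul, ← Finset.mul_sum]
          push_cast
          ring
      _ = ((n+1).factorial : ℝ) * (((n+1:ℕ):ℝ) * (((n+1:ℕ):ℝ) - 1) * (2*((n+1:ℕ):ℝ) + 5) / 72) := by
          rw [sum_B_sq, Nat.factorial_succ]
          push_cast
          ring

theorem stmt13 (n : ℕ) :
    (∑ σ : Equiv.Perm (Fin n), ((invCount σ : ℝ) - n * (n - 1) / 4) ^ 2) / (n.factorial : ℝ)
      = n * (n - 1) * (2 * n + 5) / 72 := by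
  rw [sum_sq_invCount, mul_div_cancel_left₀ _ (Nat.cast_ne_zero.mpr n.factorial_ne_zero)]
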